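/- Let U be a Hopf algebra over a field k, let ℛ⁽⁰⁾ be an algebra automorphism of U⊗U and R⁽¹⁾ ∈ U⊗U an invertible element satisfying conditions (RR1)–(RR5): Ad(R⁽¹⁾)∘ℛ⁽⁰⁾∘Δ = Δ^op; (Δ⊗id_U)∘ℛ⁽⁰⁾ = ℛ⁽⁰⁾₁₃∘ℛ⁽⁰⁾₂₃∘(Δ⊗id_U); (id_U⊗Δ)∘ℛ⁽⁰⁾ = ℛ⁽⁰⁾₁₃∘ℛ⁽⁰⁾₁₂∘(id_U⊗Δ); (Δ⊗id_U)(R⁽¹⁾) = R⁽¹⁾₁₃·ℛ⁽⁰⁾₁₃(R⁽¹⁾₂₃); (id_U⊗Δ)(R⁽¹⁾) = R⁽¹⁾₁₃·ℛ⁽⁰⁾₁₃(R⁽¹⁾₁₂). Let B be a right U-comodule algebra with coaction Δ_B : B → B⊗U, let 𝒦⁽⁰⁾ be an algebra automorphism of B⊗U and K⁽¹⁾ ∈ B⊗U an invertible element satisfying: (wqKK1) Ad(K⁽¹⁾)∘𝒦⁽⁰⁾∘Δ_B = Δ_B; (wqKK2) (Δ_B⊗id_U)∘𝒦⁽⁰⁾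 = ℛ⁽⁰⁾₃₂∘𝒦⁽⁰⁾₁₃∘ℛ⁽⁰⁾₂₃∘(Δ_B⊗id_U); (wqKK3) (id_B⊗Δ)∘𝒦⁽⁰⁾ = 𝒦⁽⁰⁾₁₂∘ℛ⁽⁰⁾₃₂∘𝒦⁽⁰⁾₁₃∘Ad(R⁽¹⁾₂₃)∘ℛ⁽⁰⁾₂₃∘(id_B⊗Δ); (wqKK4) (Δ_B⊗id_U)(K⁽¹⁾) = R⁽¹⁾₃₂·ℛ⁽⁰⁾₃₂(K⁽¹⁾₁₃)·ℛ⁽⁰⁾₃₂(𝒦⁽⁰⁾₁₃(R⁽¹⁾₂₃)); (wqKK5) (id_B⊗Δ)(K⁽¹⁾) = K⁽¹⁾₁₂·𝒦⁽⁰⁾₁₂(R⁽¹⁾₃₂)·𝒦⁽⁰⁾₁₂(ℛ⁽⁰⁾₃₂(K⁽¹⁾₁₃)). Then (B, Δ_B, Ad(K⁽¹⁾)∘𝒦⁽⁰⁾) is a weakly quasitriangular right comodule algebra over the weakly quasitriangular Hopf algebra (U, Ad(R⁽¹⁾)∘ℛ⁽⁰⁾), i.e. 𝒦 = Ad(K⁽¹⁾)∘𝒦⁽⁰⁾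 satisfies (K1), (K2) and (K3) with ℛ = Ad(R⁽¹⁾)∘ℛ⁽⁰⁾. -/

import Mathlib

open TensorProduct

noncomputable section

variable (k : Type*) [Field k]

/-- Conjugation by a unit, as a `k`-algebra automorphism. -/
def adUnit {A : Type*} [Ring A] [Algebra k A] (u : Aˣ) : A ≃ₐ[k] A where
  toFun a := ↑u * a * ↑u⁻¹
  invFun a := ↑u⁻¹ * a * ↑u
  left_inv a := by simp [mul_assoc]
  right_inv a := by simp [mul_assoc]
  map_add' a b := by noncomm_ring
  map_mul' a b := by
    show ↑u * (a * b) * ↑u⁻¹ = ↑u * a * ↑u⁻¹ * (↑u * b * ↑u⁻¹)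
    simp [mul_assoc]
  commutes' r := by
    show ↑u * algebraMap k A r * ↑u⁻¹ = algebraMap k A r
    rw [← Algebra.commutes r (↑u : A), mul_assoc, Units.mul_inv, mul_one]

variable (U : Type*) [Ring U] [HopfAlgebra k U]

/-- The coproduct `Δ : U → U ⊗ U` as an algebra homomorphism. -/
abbrev Δ : U →ₐ[k] U ⊗[k] U := Bialgebra.comulAlgHom k U

/-- The opposite coproduct `Δᵒᵖ = σ ∘ Δ`. -/
def Δop : U →ₐ[k] U ⊗[k] U :=
  (Algebra.TensorProduct.comm k U U).toAlgHom.comp (Bialgebra.comulAlgHom k U)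

/-- The flip of the last two tensor factors of `(U ⊗ U) ⊗ U`. -/
def σ23 : ((U ⊗[k] U) ⊗[k] U) ≃ₐ[k] ((U ⊗[k] U) ⊗[k] U) :=
  (Algebra.TensorProduct.assoc k k k U U U).trans <|
    (Algebra.TensorProduct.congr AlgEquiv.refl (Algebra.TensorProduct.comm k U U)).trans
      (Algebra.TensorProduct.assoc k k k U U U).symm

variable {k U}

/-- `F₁₂ = F ⊗ id` on `(U ⊗ U) ⊗ U`. -/
def leg12 (F : (U ⊗[k] U) ≃ₐ[k] (U ⊗[k] U)) :
    ((U ⊗[k] U) ⊗[k] U) ≃ₐ[k] ((U ⊗[k] U) ⊗[k] U) :=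
  Algebra.TensorProduct.congr F AlgEquiv.refl

/-- `F₂₃ = id ⊗ F` on `(U ⊗ U) ⊗ U` (transported along the associator). -/
def leg23 (F : (U ⊗[k] U) ≃ₐ[k] (U ⊗[k] U)) :
    ((U ⊗[k] U) ⊗[k] U) ≃ₐ[k] ((U ⊗[k] U) ⊗[k] U) :=
  (Algebra.TensorProduct.assoc k k k U U U).trans <|
    (Algebra.TensorProduct.congr AlgEquiv.refl F).trans
      (Algebra.TensorProduct.assoc k k k U U U).symm

/-- `F₁₃ = σ₂₃ ∘ F₁₂ ∘ σ₂₃` on `(U ⊗ U) ⊗ U`. -/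
def leg13 (F : (U ⊗[k] U) ≃ₐ[k] (U ⊗[k] U)) :
    ((U ⊗[k] U) ⊗[k] U) ≃ₐ[k] ((U ⊗[k] U) ⊗[k] U) :=
  (σ23 k U).trans ((leg12 F).trans (σ23 k U))

/-- `u₁₂ = u ⊗ 1` in `(U ⊗ U) ⊗ U`. -/
def el12 (u : U ⊗[k] U) : (U ⊗[k] U) ⊗[k] U := u ⊗ₜ[k] (1 : U)

/-- `u₂₃ = 1 ⊗ u` in `(U ⊗ U) ⊗ U`. -/
def el23 (u : U ⊗[k] U) : (U ⊗[k] U) ⊗[k] U :=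
  (Algebra.TensorProduct.assoc k k k U U U).symm ((1 : U) ⊗ₜ[k] u)

/-- `u₁₃ = σ₂₃ (u₁₂)` in `(U ⊗ U) ⊗ U`. -/
def el13 (u : U ⊗[k] U) : (U ⊗[k] U) ⊗[k] U := σ23 k U (el12 u)

variable (k U)

/-- `Δ ⊗ id : U ⊗ U → (U ⊗ U) ⊗ U`. -/
def ΔId : (U ⊗[k] U) →ₐ[k] ((U ⊗[k] U) ⊗[k] U) :=
  Algebra.TensorProduct.map (Bialgebra.comulAlgHom k U) (AlgHom.id k U)

/-- `id ⊗ Δ : U ⊗ U → (U ⊗ U) ⊗ U` (transported along the associator). -/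
def IdΔ : (U ⊗[k] U) →ₐ[k] ((U ⊗[k] U) ⊗[k] U) :=
  (Algebra.TensorProduct.assoc k k k U U U).symm.toAlgHom.comp
    (Algebra.TensorProduct.map (AlgHom.id k U) (Bialgebra.comulAlgHom k U))

end

noncomputable section

variable (k : Type*) [Field k] (U : Type*) [Ring U] [HopfAlgebra k U]
variable (B : Type*) [Ring B] [Algebra k B]

/-- The flip of the two `U`-factors of `(B ⊗ U) ⊗ U`. -/
def τ23 : ((B ⊗[k] U) ⊗[k] U) ≃ₐ[k] ((B ⊗[k] U) ⊗[k] U) :=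
  (Algebra.TensorProduct.assoc k k k B U U).trans <|
    (Algebra.TensorProduct.congr AlgEquiv.refl (Algebra.TensorProduct.comm k U U)).trans
      (Algebra.TensorProduct.assoc k k k B U U).symm

variable {k U B}

/-- `G₁₂ = G ⊗ id` on `(B ⊗ U) ⊗ U`. -/
def legB12 (G : (B ⊗[k] U) ≃ₐ[k] (B ⊗[k] U)) :
    ((B ⊗[k] U) ⊗[k] U) ≃ₐ[k] ((B ⊗[k] U) ⊗[k] U) :=
  Algebra.TensorProduct.congr G AlgEquiv.refl

/-- `G₁₃ = τ₂₃ ∘ G₁₂ ∘ τ₂₃` on `(B ⊗ U) ⊗ U`. -/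
def legB13 (G : (B ⊗[k] U) ≃ₐ[k] (B ⊗[k] U)) :
    ((B ⊗[k] U) ⊗[k] U) ≃ₐ[k] ((B ⊗[k] U) ⊗[k] U) :=
  (τ23 k U B).trans ((legB12 G).trans (τ23 k U B))

/-- `F₂₃ = id_B ⊗ F` on `(B ⊗ U) ⊗ U` (transported along the associator). -/
def legU23 (F : (U ⊗[k] U) ≃ₐ[k] (U ⊗[k] U)) :
    ((B ⊗[k] U) ⊗[k] U) ≃ₐ[k] ((B ⊗[k] U) ⊗[k] U) :=
  (Algebra.TensorProduct.assoc k k k B U U).trans <|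
    (Algebra.TensorProduct.congr AlgEquiv.refl F).trans
      (Algebra.TensorProduct.assoc k k k B U U).symm

/-- `F₃₂ = τ₂₃ ∘ F₂₃ ∘ τ₂₃` on `(B ⊗ U) ⊗ U`. -/
def legU32 (F : (U ⊗[k] U) ≃ₐ[k] (U ⊗[k] U)) :
    ((B ⊗[k] U) ⊗[k] U) ≃ₐ[k] ((B ⊗[k] U) ⊗[k] U) :=
  (τ23 k U B).trans ((legU23 F).trans (τ23 k U B))

/-- `v₁₂ = v ⊗ 1` in `(B ⊗ U) ⊗ U`. -/
def elB12 (v : B ⊗[k] U) : (B ⊗[k] U) ⊗[k] U := v ⊗ₜ[k] (1 : U)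

/-- `v₁₃ = τ₂₃ (v₁₂)` in `(B ⊗ U) ⊗ U`. -/
def elB13 (v : B ⊗[k] U) : (B ⊗[k] U) ⊗[k] U := τ23 k U B (elB12 v)

/-- `u₂₃ = 1_B ⊗ u` in `(B ⊗ U) ⊗ U`. -/
def elU23 (u : U ⊗[k] U) : (B ⊗[k] U) ⊗[k] U :=
  (Algebra.TensorProduct.assoc k k k B U U).symm ((1 : B) ⊗ₜ[k] u)

/-- `u₃₂ = τ₂₃ (u₂₃)` in `(B ⊗ U) ⊗ U`. -/
def elU32 (u : U ⊗[k] U) : (B ⊗[k] U) ⊗[k] U := τ23 k U B (elU23 u)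

/-- `Δ_B ⊗ id : B ⊗ U → (B ⊗ U) ⊗ U`. -/
def ΔBId (ΔB : B →ₐ[k] B ⊗[k] U) : (B ⊗[k] U) →ₐ[k] ((B ⊗[k] U) ⊗[k] U) :=
  Algebra.TensorProduct.map ΔB (AlgHom.id k U)

variable (k U B) in
/-- `id_B ⊗ Δ : B ⊗ U → (B ⊗ U) ⊗ U` (transported along the associator). -/
def IdBΔ : (B ⊗[k] U) →ₐ[k] ((B ⊗[k] U) ⊗[k] U) :=
  (Algebra.TensorProduct.assoc k k k B U U).symm.toAlgHom.comp
    (Algebra.TensorProduct.map (AlgHom.id k B) (Bialgebra.comulAlgHom k U))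

/-- `B` together with `Δ_B : B →ₐ B ⊗ U` is a right `U`-comodule algebra:
`Δ_B` is coassociative and counital. -/
def IsComoduleAlgebra (ΔB : B →ₐ[k] B ⊗[k] U) : Prop :=
  (∀ b : B, ΔBId ΔB (ΔB b) = IdBΔ k U B (ΔB b)) ∧
  (∀ b : B, Algebra.TensorProduct.rid k k B
      (Algebra.TensorProduct.map (AlgHom.id k B) (Bialgebra.counitAlgHom k U) (ΔB b)) = b)

end

set_option maxHeartbeats 1600000

section Helpers
variable {k : Type*} [Field k] {U : Type*} [Ring U] [HopfAlgebra k U]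
variable {B : Type*} [Ring B] [Algebra k B]

private lemma congr_refl_adUnit' {A C : Type*} [Ring A] [Algebra k A] [Ring C] [Algebra k C]
    (u : Cˣ) (x : A ⊗[k] C) :
    Algebra.TensorProduct.congr (AlgEquiv.refl : A ≃ₐ[k] A) (adUnit k u) x
      = ((1:A) ⊗ₜ[k] (↑u:C)) * x * ((1:A) ⊗ₜ[k] ((↑u⁻¹ : C))) := by
  induction x using TensorProduct.induction_on with
  | zero => simp
  | tmul a c =>
      simp only [Algebra.TensorProduct.congr_apply, Algebra.TensorProduct.map_tmul,
        AlgHom.coe_coe, AlgEquiv.coe_refl, id_eq, Algebra.TensorProduct.tmul_mul_tmul,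
        one_mul, mul_one]
      rfl
  | add x y hx hy => simp only [map_add, hx, hy, mul_add, add_mul]

private lemma congr_adUnit_refl' {A C : Type*} [Ring A] [Algebra k A] [Ring C] [Algebra k C]
    (u : Aˣ) (x : A ⊗[k] C) :
    Algebra.TensorProduct.congr (adUnit k u) (AlgEquiv.refl : C ≃ₐ[k] C) x
      = ((↑u:A) ⊗ₜ[k] (1:C)) * x * (((↑u⁻¹:A)) ⊗ₜ[k] (1:C)) := by
  induction x using TensorProduct.induction_on with
  | zero => simp
  | tmul a c =>
      simp only [Algebra.TensorProduct.congr_apply, Algebra.TensorProduct.map_tmul,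
        AlgHom.coe_coe, AlgEquiv.coe_refl, id_eq, Algebra.TensorProduct.tmul_mul_tmul,
        one_mul, mul_one]
      rfl
  | add x y hx hy => simp only [map_add, hx, hy, mul_add, add_mul]

private lemma congr_refl_trans' {A C : Type*} [Ring A] [Algebra k A] [Ring C] [Algebra k C]
    (F G : C ≃ₐ[k] C) (x : A ⊗[k] C) :
    Algebra.TensorProduct.congr (AlgEquiv.refl : A ≃ₐ[k] A) (F.trans G) x
      = Algebra.TensorProduct.congr (AlgEquiv.refl : A ≃ₐ[k] A) G
          (Algebra.TensorProduct.congr (AlgEquiv.refl : A ≃ₐ[k] A) F x) := by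
  induction x using TensorProduct.induction_on with
  | zero => simp
  | tmul a c => simp
  | add x y hx hy => simp only [map_add, hx, hy]

private lemma congr_trans_refl' {A C : Type*} [Ring A] [Algebra k A] [Ring C] [Algebra k C]
    (F G : A ≃ₐ[k] A) (x : A ⊗[k] C) :
    Algebra.TensorProduct.congr (F.trans G) (AlgEquiv.refl : C ≃ₐ[k] C) x
      = Algebra.TensorProduct.congr G (AlgEquiv.refl : C ≃ₐ[k] C)
          (Algebra.TensorProduct.congr F (AlgEquiv.refl : C ≃ₐ[k] C) x) := by
  induction x using TensorProduct.induction_on with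
  | zero => simp
  | tmul a c => simp
  | add x y hx hy => simp only [map_add, hx, hy]

/-- `legU23` of a composite with conjugation. -/
private lemma legU23_ad (F : (U ⊗[k] U) ≃ₐ[k] (U ⊗[k] U)) (u : (U ⊗[k] U)ˣ)
    (y : (B ⊗[k] U) ⊗[k] U) :
    legU23 (F.trans (adUnit k u)) y
      = elU23 (↑u : U ⊗[k] U) * legU23 F y * elU23 ((↑u⁻¹ : U ⊗[k] U)) := by
  show (Algebra.TensorProduct.assoc k k k B U U).symm
      (Algebra.TensorProduct.congr AlgEquiv.refl (F.trans (adUnit k u))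
        (Algebra.TensorProduct.assoc k k k B U U y)) = _
  rw [congr_refl_trans', congr_refl_adUnit', map_mul, map_mul]
  rfl

private lemma legB12_ad (G : (B ⊗[k] U) ≃ₐ[k] (B ⊗[k] U)) (u : (B ⊗[k] U)ˣ)
    (y : (B ⊗[k] U) ⊗[k] U) :
    legB12 (G.trans (adUnit k u)) y
      = elB12 (↑u : B ⊗[k] U) * legB12 G y * elB12 ((↑u⁻¹ : B ⊗[k] U)) := by
  show Algebra.TensorProduct.congr (G.trans (adUnit k u)) AlgEquiv.refl y = _
  rw [congr_trans_refl', congr_adUnit_refl']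
  rfl

private lemma tau_tau (y : (B ⊗[k] U) ⊗[k] U) : τ23 k U B (τ23 k U B y) = y := by
  induction y using TensorProduct.induction_on with
  | zero => simp
  | tmul p w =>
      induction p using TensorProduct.induction_on with
      | zero => simp [TensorProduct.zero_tmul]
      | tmul b u => rfl
      | add p q hp hq => simp only [TensorProduct.add_tmul, map_add, hp, hq]
  | add x y hx hy => simp only [map_add, hx, hy]

private lemma legU32_eq (F : (U ⊗[k] U) ≃ₐ[k] (U ⊗[k] U)) (y : (B ⊗[k] U) ⊗[k] U) :
    legU32 F y = τ23 k U B (legU23 F (τ23 k U B y)) := rfl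

private lemma legB13_eq (G : (B ⊗[k] U) ≃ₐ[k] (B ⊗[k] U)) (y : (B ⊗[k] U) ⊗[k] U) :
    legB13 G y = τ23 k U B (legB12 G (τ23 k U B y)) := rfl

private lemma legU32_ad (F : (U ⊗[k] U) ≃ₐ[k] (U ⊗[k] U)) (u : (U ⊗[k] U)ˣ)
    (y : (B ⊗[k] U) ⊗[k] U) :
    legU32 (F.trans (adUnit k u)) y
      = elU32 (↑u : U ⊗[k] U) * legU32 F y * elU32 ((↑u⁻¹ : U ⊗[k] U)) := by
  rw [legU32_eq, legU23_ad, map_mul, map_mul, legU32_eq]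
  rfl

private lemma legB13_ad (G : (B ⊗[k] U) ≃ₐ[k] (B ⊗[k] U)) (u : (B ⊗[k] U)ˣ)
    (y : (B ⊗[k] U) ⊗[k] U) :
    legB13 (G.trans (adUnit k u)) y
      = elB13 (↑u : B ⊗[k] U) * legB13 G y * elB13 ((↑u⁻¹ : B ⊗[k] U)) := by
  rw [legB13_eq, legB12_ad, map_mul, map_mul, legB13_eq]
  rfl

end Helpers

section Helpers2
variable {k : Type*} [Field k] {U : Type*} [Ring U] [HopfAlgebra k U]
variable {B : Type*} [Ring B] [Algebra k B]

private lemma elU23_mul (u v : U ⊗[k] U) :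
    elU23 (B := B) (u * v) = elU23 u * elU23 v := by
  unfold elU23
  rw [← map_mul, Algebra.TensorProduct.tmul_mul_tmul, one_mul]

private lemma elU23_one : elU23 (B := B) (1 : U ⊗[k] U) = 1 := by
  unfold elU23
  rw [← Algebra.TensorProduct.one_def, map_one]

private lemma elB12_mul (u v : B ⊗[k] U) :
    elB12 (u * v) = elB12 u * elB12 v := by
  unfold elB12
  rw [Algebra.TensorProduct.tmul_mul_tmul, mul_one]

private lemma elB12_one : elB12 (1 : B ⊗[k] U) = 1 := by
  unfold elB12
  rw [← Algebra.TensorProduct.one_def]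

private lemma elU32_eq (u : U ⊗[k] U) : elU32 (B := B) u = τ23 k U B (elU23 u) := rfl

private lemma elB13_eq (v : B ⊗[k] U) : elB13 v = τ23 k U B (elB12 v) := rfl

private lemma elU32_mul (u v : U ⊗[k] U) :
    elU32 (B := B) (u * v) = elU32 u * elU32 v := by
  rw [elU32_eq, elU23_mul, map_mul, elU32_eq, elU32_eq]

private lemma elU32_one : elU32 (B := B) (1 : U ⊗[k] U) = 1 := by
  rw [elU32_eq, elU23_one, map_one]

private lemma elB13_mul (u v : B ⊗[k] U) :
    elB13 (u * v) = elB13 u * elB13 v := by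
  rw [elB13_eq, elB12_mul, map_mul, elB13_eq, elB13_eq]

private lemma elB13_one : elB13 (1 : B ⊗[k] U) = 1 := by
  rw [elB13_eq, elB12_one, map_one]

private lemma legB12_tau (G : (B ⊗[k] U) ≃ₐ[k] (B ⊗[k] U)) (y : (B ⊗[k] U) ⊗[k] U) :
    legB12 G (τ23 k U B y) = τ23 k U B (legB13 G y) := by
  rw [legB13_eq, tau_tau]

private lemma legB13_tau (G : (B ⊗[k] U) ≃ₐ[k] (B ⊗[k] U)) (y : (B ⊗[k] U) ⊗[k] U) :
    legB13 G (τ23 k U B y) = τ23 k U B (legB12 G y) := by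
  rw [legB13_eq, tau_tau]

private lemma legU23_tau (F : (U ⊗[k] U) ≃ₐ[k] (U ⊗[k] U)) (y : (B ⊗[k] U) ⊗[k] U) :
    legU23 F (τ23 k U B y) = τ23 k U B (legU32 F y) := by
  rw [legU32_eq, tau_tau]

private lemma legU32_tau (F : (U ⊗[k] U) ≃ₐ[k] (U ⊗[k] U)) (y : (B ⊗[k] U) ⊗[k] U) :
    legU32 F (τ23 k U B y) = τ23 k U B (legU23 F y) := by
  rw [legU32_eq, tau_tau]

/-- (wq1) consequence: `ℛ₂₃ ∘ (id ⊗ Δ) = τ₂₃ ∘ (id ⊗ Δ)`. -/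
private lemma legU23_R_IdBΔ (R0 : (U ⊗[k] U) ≃ₐ[k] (U ⊗[k] U)) (R1 : (U ⊗[k] U)ˣ)
    (RR1 : ∀ u : U, (R1 : U ⊗[k] U) * R0 (Bialgebra.comulAlgHom k U u) * ↑R1⁻¹ = Δop k U u)
    (v : B ⊗[k] U) :
    legU23 (R0.trans (adUnit k R1)) (IdBΔ k U B v) = τ23 k U B (IdBΔ k U B v) := by
  induction v using TensorProduct.induction_on with
  | zero => simp
  | tmul b u =>
      have h1 : IdBΔ k U B (b ⊗ₜ[k] u)
          = (Algebra.TensorProduct.assoc k k k B U U).symm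
              (b ⊗ₜ[k] (Bialgebra.comulAlgHom k U u)) := rfl
      rw [h1]
      show (Algebra.TensorProduct.assoc k k k B U U).symm
          (Algebra.TensorProduct.congr AlgEquiv.refl (R0.trans (adUnit k R1))
            (Algebra.TensorProduct.assoc k k k B U U
              ((Algebra.TensorProduct.assoc k k k B U U).symm
                (b ⊗ₜ[k] (Bialgebra.comulAlgHom k U u)))))
        = (Algebra.TensorProduct.assoc k k k B U U).symm
          (Algebra.TensorProduct.congr AlgEquiv.refl (Algebra.TensorProduct.comm k U U)
            (Algebra.TensorProduct.assoc k k k B U U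
              ((Algebra.TensorProduct.assoc k k k B U U).symm
                (b ⊗ₜ[k] (Bialgebra.comulAlgHom k U u)))))
      rw [AlgEquiv.apply_symm_apply]
      congr 1
      simp only [Algebra.TensorProduct.congr_apply, Algebra.TensorProduct.map_tmul,
        AlgHom.coe_coe, AlgEquiv.coe_refl, id_eq]
      congr 1
      exact RR1 u
  | add x y hx hy => simp only [map_add, hx, hy]

private lemma conj_eq {M : Type*} [Monoid M] {dK1 dK1i dK0x e1 e2 e3 f3 f2 f1 m : M}
    (hD : dK1i * dK1 = 1)
    (hP : dK1 = e1 * e2 * e3)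
    (hM : dK0x = m)
    (h1 : e1 * f1 = 1) (h2 : e2 * f2 = 1) (h3 : e3 * f3 = 1) :
    dK1 * (dK0x * dK1i) = e1 * (e2 * (e3 * (m * (f3 * (f2 * f1))))) := by
  have hQ : dK1 * (f3 * (f2 * f1)) = 1 := by
    rw [hP, mul_assoc, mul_assoc, ← mul_assoc e3 f3, h3, one_mul,
      ← mul_assoc e2 f2, h2, one_mul, h1]
  have hinv : dK1i = f3 * (f2 * f1) := left_inv_eq_right_inv hD hQ
  rw [hinv, hM, hP]
  simp only [mul_assoc]

end Helpers2

/-- Lemma `lem:wq-KK`: given data `(ℛ⁽⁰⁾, R⁽¹⁾)` satisfying (RR1)–(RR5) on the Hopf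
algebra `U`, and data `(𝒦⁽⁰⁾, K⁽¹⁾)` on a right `U`-comodule algebra `B` satisfying
(wqKK1)–(wqKK5), the automorphism `𝒦 = Ad(K⁽¹⁾) ∘ 𝒦⁽⁰⁾` makes `B` a weakly
quasitriangular right comodule algebra over `(U, ℛ)` with `ℛ = Ad(R⁽¹⁾) ∘ ℛ⁽⁰⁾`,
i.e. `𝒦` satisfies (K1), (K2) and (K3). -/
theorem weaklyQuasitriangular_comodule_of_KK
    {k : Type*} [Field k] {U : Type*} [Ring U] [HopfAlgebra k U]
    {B : Type*} [Ring B] [Algebra k B]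
    (ΔB : B →ₐ[k] B ⊗[k] U) (hB : IsComoduleAlgebra ΔB)
    (R0 : (U ⊗[k] U) ≃ₐ[k] (U ⊗[k] U)) (R1 : (U ⊗[k] U)ˣ)
    (RR1 : ∀ u : U, (R1 : U ⊗[k] U) * R0 (Bialgebra.comulAlgHom k U u) * ↑R1⁻¹ = Δop k U u)
    (RR2 : ∀ x : U ⊗[k] U, ΔId k U (R0 x) = leg13 R0 (leg23 R0 (ΔId k U x)))
    (RR3 : ∀ x : U ⊗[k] U, IdΔ k U (R0 x) = leg13 R0 (leg12 R0 (IdΔ k U x)))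
    (RR4 : ΔId k U (R1 : U ⊗[k] U) = el13 (R1 : U ⊗[k] U) * leg13 R0 (el23 (R1 : U ⊗[k] U)))
    (RR5 : IdΔ k U (R1 : U ⊗[k] U) = el13 (R1 : U ⊗[k] U) * leg13 R0 (el12 (R1 : U ⊗[k] U)))
    (K0 : (B ⊗[k] U) ≃ₐ[k] (B ⊗[k] U)) (K1 : (B ⊗[k] U)ˣ)
    (wqKK1 : ∀ b : B, (K1 : B ⊗[k] U) * K0 (ΔB b) * ↑K1⁻¹ = ΔB b)
    (wqKK2 : ∀ x : B ⊗[k] U,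
      ΔBId ΔB (K0 x) = legU32 R0 (legB13 K0 (legU23 R0 (ΔBId ΔB x))))
    (wqKK3 : ∀ x : B ⊗[k] U,
      IdBΔ k U B (K0 x) = legB12 K0 (legU32 R0 (legB13 K0
        (elU23 (R1 : U ⊗[k] U) * legU23 R0 (IdBΔ k U B x) * elU23 ((R1⁻¹ : (U ⊗[k] U)ˣ) : U ⊗[k] U)))))
    (wqKK4 : ΔBId ΔB (K1 : B ⊗[k] U) =
      elU32 (R1 : U ⊗[k] U) * legU32 R0 (elB13 (K1 : B ⊗[k] U)) *
        legU32 R0 (legB13 K0 (elU23 (R1 : U ⊗[k] U))))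
    (wqKK5 : IdBΔ k U B (K1 : B ⊗[k] U) =
      elB12 (K1 : B ⊗[k] U) * legB12 K0 (elU32 (R1 : U ⊗[k] U)) *
        legB12 K0 (legU32 R0 (elB13 (K1 : B ⊗[k] U)))) :
    (∀ b : B, (K0.trans (adUnit k K1)) (ΔB b) = ΔB b) ∧
    (∀ x : B ⊗[k] U, ΔBId ΔB ((K0.trans (adUnit k K1)) x) =
      legU32 (R0.trans (adUnit k R1)) (legB13 (K0.trans (adUnit k K1))
        (legU23 (R0.trans (adUnit k R1)) (ΔBId ΔB x)))) ∧
    (∀ x : B ⊗[k] U, IdBΔ k U B ((K0.trans (adUnit k K1)) x) =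
      legU32 (R0.trans (adUnit k R1)) (legB13 (K0.trans (adUnit k K1))
        (legU23 (R0.trans (adUnit k R1)) (legB12 (K0.trans (adUnit k K1)) (IdBΔ k U B x))))) := by

  have hD2 : ∀ y : B ⊗[k] U, ΔBId ΔB ((K1⁻¹ : (B ⊗[k] U)ˣ) : B ⊗[k] U) * ΔBId ΔB (K1 : B ⊗[k] U) = 1 := by
    intro _; rw [← map_mul, Units.inv_mul, map_one]
  -- (K2)
  have hK2 : ∀ x : B ⊗[k] U, ΔBId ΔB ((K0.trans (adUnit k K1)) x) =
      legU32 (R0.trans (adUnit k R1)) (legB13 (K0.trans (adUnit k K1))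
        (legU23 (R0.trans (adUnit k R1)) (ΔBId ΔB x))) := by
    intro x
    rw [show (K0.trans (adUnit k K1)) x = ↑K1 * K0 x * ↑K1⁻¹ from rfl]
    rw [legU23_ad, legB13_ad, legU32_ad]
    simp only [map_mul]
    simp only [mul_assoc]
    refine conj_eq ?_ wqKK4 (wqKK2 x) ?_ ?_ ?_
    · rw [← map_mul, Units.inv_mul, map_one]
    · rw [← elU32_mul, Units.mul_inv, elU32_one]
    · rw [← map_mul, ← elB13_mul, Units.mul_inv, elB13_one, map_one]
    · rw [← map_mul, ← map_mul, ← elU23_mul, Units.mul_inv, elU23_one, map_one, map_one]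
  -- (K3')
  have hK3' : ∀ v : B ⊗[k] U, IdBΔ k U B ((K0.trans (adUnit k K1)) v) =
      legB12 (K0.trans (adUnit k K1)) (legU32 (R0.trans (adUnit k R1))
        (legB13 (K0.trans (adUnit k K1)) (legU23 (R0.trans (adUnit k R1)) (IdBΔ k U B v)))) := by
    intro v
    rw [show (K0.trans (adUnit k K1)) v = ↑K1 * K0 v * ↑K1⁻¹ from rfl]
    rw [legU23_ad, legB13_ad, legU32_ad, legB12_ad]
    have hC := wqKK3 v
    generalize legB13 K0 (elU23 ((R1 : U ⊗[k] U)) * legU23 R0 (IdBΔ k U B v) *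
      elU23 ((R1⁻¹ : (U ⊗[k] U)ˣ) : U ⊗[k] U)) = C at hC ⊢
    simp only [map_mul]
    simp only [mul_assoc]
    refine conj_eq ?_ wqKK5 hC ?_ ?_ ?_
    · rw [← map_mul, Units.inv_mul, map_one]
    · rw [← elB12_mul, Units.mul_inv, elB12_one]
    · rw [← map_mul, ← elU32_mul, Units.mul_inv, elU32_one, map_one]
    · rw [← map_mul, ← map_mul, ← elB13_mul, Units.mul_inv, elB13_one, map_one, map_one]
  refine ⟨fun b => wqKK1 b, hK2, ?_⟩
  -- (K3)
  intro x
  have hT4 : ∀ v : B ⊗[k] U, legU23 (R0.trans (adUnit k R1)) (IdBΔ k U B v)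
      = τ23 k U B (IdBΔ k U B v) := legU23_R_IdBΔ R0 R1 RR1
  have step : τ23 k U B (IdBΔ k U B ((K0.trans (adUnit k K1)) x))
      = legB13 (K0.trans (adUnit k K1)) (legU23 (R0.trans (adUnit k R1))
          (legB12 (K0.trans (adUnit k K1)) (IdBΔ k U B x))) := by
    rw [hK3' x, hT4 x, legB13_tau, legU32_tau, legB12_tau, tau_tau]
  rw [← step, legU32_tau, hT4 ((K0.trans (adUnit k K1)) x), tau_tau]
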